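/- Let n be a positive integer and let 𝒯 : ℝ^n → ℝ^n be twice continuously differentiable. Suppose that for every p ∈ ℝ^n the Jacobian matrix D𝒯(p) (the matrix with entries ∂𝒯_i/∂p_j evaluated at p) is an orthogonal matrix. Then the Jacobian is constant: there exists a fixed orthogonal matrix Q₀ such that D𝒯(p) = Q₀ for all p ∈ ℝ^n. -/

import Mathlib

open Matrix

open scoped RealInnerProductSpace

/-- If `𝒯 : ℝ^n → ℝ^n` is twice continuously differentiable and its Jacobian matrix is
orthogonal at every point, then the Jacobian is a constant orthogonal matrix. -/
theorem jacobian_orthogonal_implies_constant (n : ℕ) (hn : 0 < n)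
    (T : EuclideanSpace ℝ (Fin n) → EuclideanSpace ℝ (Fin n))
    (hT : ContDiff ℝ 2 T)
    (J : EuclideanSpace ℝ (Fin n) → Matrix (Fin n) (Fin n) ℝ)
    (hJ : ∀ p i j, J p i j = fderiv ℝ T p (EuclideanSpace.single j 1) i)
    (horth : ∀ p, J p * (J p)ᵀ = 1) :
    ∃ Q₀ : Matrix (Fin n) (Fin n) ℝ, Q₀ * Q₀ᵀ = 1 ∧ ∀ p, J p = Q₀ := by
  classical
  set e : Fin n → EuclideanSpace ℝ (Fin n) := fun i => EuclideanSpace.single i 1 with he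
  set F : EuclideanSpace ℝ (Fin n) → (EuclideanSpace ℝ (Fin n) →L[ℝ] EuclideanSpace ℝ (Fin n)) :=
    fderiv ℝ T with hFdef
  have hF1 : ContDiff ℝ 1 F := hT.fderiv_right (by norm_num)
  have hFd : Differentiable ℝ F := hF1.differentiable (by norm_num)
  have hTd : ∀ y, HasFDerivAt T (F y) y := fun y =>
    ((hT.differentiable (by norm_num)) y).hasFDerivAt
  set S : EuclideanSpace ℝ (Fin n) →
      (EuclideanSpace ℝ (Fin n) →L[ℝ] EuclideanSpace ℝ (Fin n) →L[ℝ] EuclideanSpace ℝ (Fin n)) :=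
    fun p => fderiv ℝ F p with hSdef
  have hJF : ∀ p i j, F p (e j) i = J p i j := fun p i j => (hJ p i j).symm
  have horth' : ∀ p, (J p)ᵀ * J p = 1 := fun p => mul_eq_one_comm.mp (horth p)
  -- inner products of images of basis vectors
  have hinner : ∀ p i j, ⟪F p (e i), F p (e j)⟫ = if i = j then (1 : ℝ) else 0 := by
    intro p i j
    have h1 : ((J p)ᵀ * J p) i j = (1 : Matrix (Fin n) (Fin n) ℝ) i j := by rw [horth' p]
    rw [Matrix.mul_apply, Matrix.one_apply] at h1
    simp only [Matrix.transpose_apply] at h1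
    rw [PiLp.inner_apply]
    simp only [RCLike.inner_apply, starRingEnd_apply, star_trivial]
    rw [← h1]
    exact Finset.sum_congr rfl fun m _ => by rw [hJF, hJF, mul_comm]
  -- the derivative of `p ↦ F p u`
  have hFe : ∀ (p : EuclideanSpace ℝ (Fin n)) (u : EuclideanSpace ℝ (Fin n)),
      HasFDerivAt (fun q => F q u)
        ((ContinuousLinearMap.apply ℝ (EuclideanSpace ℝ (Fin n)) u).comp (S p)) p := by
    intro p u
    exact (ContinuousLinearMap.apply ℝ (EuclideanSpace ℝ (Fin n)) u).hasFDerivAt.comp p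
      (hFd p).hasFDerivAt
  -- differentiate the orthogonality relation
  have key1 : ∀ p i j k,
      ⟪F p (e i), S p (e k) (e j)⟫ + ⟪S p (e k) (e i), F p (e j)⟫ = 0 := by
    intro p i j k
    have hd := (hFe p (e i)).inner ℝ (hFe p (e j))
    have hc : HasFDerivAt (fun q => ⟪F q (e i), F q (e j)⟫)
        (0 : EuclideanSpace ℝ (Fin n) →L[ℝ] ℝ) p := by
      have : (fun q => ⟪F q (e i), F q (e j)⟫)
          = fun _ => (if i = j then (1 : ℝ) else 0) := funext fun q => hinner q i j
      rw [this]
      exact hasFDerivAt_const _ _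
    have h0 := hd.unique hc
    have := congrFun (congrArg (fun (L : EuclideanSpace ℝ (Fin n) →L[ℝ] ℝ) => (L : _ → ℝ)) h0)
      (e k)
    simpa using this
  -- symmetry of second derivative
  have key2 : ∀ p u v, S p u v = S p v u := fun p u v =>
    second_derivative_symmetric hTd (hFd p).hasFDerivAt u v
  -- the trilinear quantity vanishes
  have czero : ∀ p i j k, ⟪S p (e k) (e i), F p (e j)⟫ = 0 := by
    intro p i j k
    set c : Fin n → Fin n → Fin n → ℝ := fun a b d => ⟪S p (e d) (e a), F p (e b)⟫ with hc
    have hA : ∀ a b d, c a b d + c b a d = 0 := by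
      intro a b d
      have h1 := key1 p a b d
      have h2 := real_inner_comm ((F p) (e a)) (((S p) (e d)) (e b))
      simp only [hc]
      linarith [h1, h2]
    have hS : ∀ a b d, c a b d = c d b a := by
      intro a b d
      simp only [hc]
      rw [key2 p (e d) (e a)]
    have h1 := hA i j k
    have h2 := hS j i k
    have h3 := hA k i j
    have h4 := hS i k j
    have h5 := hA j k i
    have h6 := hS k j i
    show c i j k = 0
    linarith
  -- hence the second derivative vanishes at basis vectors
  have Szero : ∀ p k i, S p (e k) (e i) = 0 := by
    intro p k i
    set z : Fin n → ℝ := fun m => S p (e k) (e i) m with hz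
    have hvm : Matrix.vecMul z (J p) = 0 := by
      funext j
      have h := czero p i j k
      rw [PiLp.inner_apply] at h
      simp only [RCLike.inner_apply, starRingEnd_apply, star_trivial] at h
      simp only [Matrix.vecMul, dotProduct, Pi.zero_apply]
      rw [← h]
      refine Finset.sum_congr rfl fun m _ => ?_
      simp only [hz]
      rw [hJF, mul_comm]
    have hz0 : z = 0 := by
      have : Matrix.vecMul z ((J p) * (J p)ᵀ) = 0 := by
        rw [← Matrix.vecMul_vecMul, hvm, Matrix.zero_vecMul]
      rwa [horth p, Matrix.vecMul_one] at this
    ext m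
    exact congrFun hz0 m
  -- hence the second derivative vanishes
  have Sp0 : ∀ p, S p = 0 := by
    intro p
    apply ContinuousLinearMap.coe_injective
    apply Module.Basis.ext (EuclideanSpace.basisFun (Fin n) ℝ).toBasis
    intro k
    rw [OrthonormalBasis.coe_toBasis, EuclideanSpace.basisFun_apply]
    apply ContinuousLinearMap.coe_injective
    apply Module.Basis.ext (EuclideanSpace.basisFun (Fin n) ℝ).toBasis
    intro i
    rw [OrthonormalBasis.coe_toBasis, EuclideanSpace.basisFun_apply]
    simpa using Szero p k i
  have hconst : ∀ p, F p = F 0 := fun p =>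
    is_const_of_fderiv_eq_zero hFd (fun q => Sp0 q) p 0
  refine ⟨J 0, horth 0, fun p => ?_⟩
  ext i j
  rw [hJ p i j, hJ 0 i j, hconst p]
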